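/- Let T_1, ..., T_M be firmly nonexpansive operators on ℝ^d, g_i(x) = x − T_i(x), x⋆ a fixed point of 𝒯 = (1/M) Σ_{i=1}^M T_i, and σ² = (1/M) Σ_{i=1}^M ‖x⋆ − T_i(x⋆)‖². Let H ≥ 1 be an integer, let k_p < k_{p+1} be integers with k_{p+1} − k_p ≤ H, let λ satisfy 0 < λ ≤ 1/(8·max(1, H−1)), and let x_i^k ∈ ℝ^d for i = 1,...,M and k_p ≤ k ≤ k_{p+1}−1 satisfy: x_i^{k_p} = x̂^{k_p} for all i (where x̂^k = (1/M) Σ_{i=1}^M x_i^k), and x_i^{k+1} = x_i^k − λ g_i(x_i^k) for k_p ≤ k < k_{p+1}−1. Then, with V_k = (1/M) Σ_{i=1}^M ‖x_i^k − x̂^k‖², Σ_{k=k_p}^{k_{p+1}−1} ( −(1/2)λ(1−λ)(1/M) Σ_{i=1}^M ‖x̂^k − T_i(x̂^k) + T_i(x⋆) − x⋆‖² + λ(2−λ)V_k ) ≤ −(λ/3) Σ_{k=k_p}^{k_{p+1}−1} (1/M) Σ_{i=1}^M ‖x̂^k − T_i(x̂^k) + T_i(x⋆) − x⋆‖² + 12λ³(H−1)²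 Σ_{k=k_p}^{k_{p+1}−1} σ². -/

import Mathlib

open Finset

lemma aux_cs {E : Type*} [SeminormedAddCommGroup E] (s : Finset ℕ) (v : ℕ → E) :
    ‖∑ j ∈ s, v j‖ ^ 2 ≤ (s.card : ℝ) * ∑ j ∈ s, ‖v j‖ ^ 2 := by
  calc ‖∑ j ∈ s, v j‖ ^ 2 ≤ (∑ j ∈ s, ‖v j‖) ^ 2 := by
        have h := norm_sum_le s v
        exact pow_le_pow_left₀ (norm_nonneg _) h 2
    _ ≤ (s.card : ℝ) * ∑ j ∈ s, ‖v j‖ ^ 2 := by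
        have := sq_sum_le_card_mul_sum_sq (s := s) (f := fun j => ‖v j‖)
        exact_mod_cast this

lemma aux_var {d M : ℕ} (a : Fin M → EuclideanSpace ℝ (Fin d)) (hM : 0 < M) :
    ∑ i, ‖a i - (M : ℝ)⁻¹ • ∑ j, a j‖ ^ 2 ≤ ∑ i, ‖a i‖ ^ 2 := by
  set b : EuclideanSpace ℝ (Fin d) := (M : ℝ)⁻¹ • ∑ j, a j with hb
  have hM0 : (M : ℝ) ≠ 0 := Nat.cast_ne_zero.mpr hM.ne'
  have hsum : ∑ j, a j = (M : ℝ) • b := by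
    rw [hb, smul_smul, mul_inv_cancel₀ hM0, one_smul]
  have hexp : ∀ i : Fin M, ‖a i - b‖ ^ 2 = ‖a i‖ ^ 2 - 2 * inner ℝ (a i) b + ‖b‖ ^ 2 :=
    fun i => norm_sub_sq_real (a i) b
  have hsum2 : ∑ i, (inner ℝ (a i) b : ℝ) = (M : ℝ) * ‖b‖ ^ 2 := by
    rw [← sum_inner, hsum, real_inner_smul_left, real_inner_self_eq_norm_sq]
  have hcard : (Finset.univ : Finset (Fin M)).card = M :=
    Finset.card_univ.trans (Fintype.card_fin M)
  calc ∑ i, ‖a i - b‖ ^ 2 = ∑ i, (‖a i‖ ^ 2 - 2 * inner ℝ (a i) b + ‖b‖ ^ 2) :=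
        Finset.sum_congr rfl (fun i _ => hexp i)
    _ = ∑ i, ‖a i‖ ^ 2 - 2 * ((M : ℝ) * ‖b‖ ^ 2) + (M : ℝ) * ‖b‖ ^ 2 := by
        rw [Finset.sum_add_distrib, Finset.sum_sub_distrib, ← Finset.mul_sum, hsum2,
          Finset.sum_const, hcard, nsmul_eq_mul]
    _ ≤ ∑ i, ‖a i‖ ^ 2 := by
        have h1 : (0:ℝ) ≤ ‖b‖ ^ 2 := sq_nonneg _
        have h2 : (0:ℝ) ≤ (M : ℝ) := Nat.cast_nonneg M
        nlinarith

lemma aux_arith (h l SD SV Sσ : ℝ) (hl0 : 0 < l) (hl8 : l ≤ 1/8) (hlh : l * h ≤ 1/8)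
    (hh0 : 0 ≤ h) (hSD0 : 0 ≤ SD) (hSV0 : 0 ≤ SV) (hSσ0 : 0 ≤ Sσ)
    (key : SV ≤ 3 * l^2 * h^2 * (SV + SD + Sσ)) :
    -(1/2) * l * (1 - l) * SD + l * (2 - l) * SV
      ≤ -(l/3) * SD + 12 * l^3 * h^2 * Sσ := by
  have e6 : 0 ≤ l * SD := mul_nonneg hl0.le hSD0
  have e7 : 0 ≤ l * Sσ := mul_nonneg hl0.le hSσ0
  have hlh2 : l^2 * h^2 ≤ 1/64 := by
    nlinarith [mul_le_mul hlh hlh (mul_nonneg hl0.le hh0) (by norm_num : (0:ℝ) ≤ 1/8)]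
  have hx1 : (1 - 3/64) * SV ≤ 3 * l^2 * h^2 * (SD + Sσ) := by
    nlinarith [key, mul_nonneg (by linarith : (0:ℝ) ≤ 3/64 - 3 * l^2 * h^2) hSV0]
  have key2 : SV ≤ (64/61) * (3 * l^2 * h^2 * (SD + Sσ)) := by linarith
  have lkey : l * SV ≤ (192/61) * (l^3 * h^2 * SD + l^3 * h^2 * Sσ) := by
    calc l * SV ≤ l * ((64/61) * (3 * l^2 * h^2 * (SD + Sσ))) :=
          mul_le_mul_of_nonneg_left key2 hl0.le
      _ = (192/61) * (l^3 * h^2 * SD + l^3 * h^2 * Sσ) := by ring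
  have e1 : l^3 * h^2 * SD ≤ (1/64) * (l * SD) := by
    calc l^3 * h^2 * SD = (l^2 * h^2) * (l * SD) := by ring
      _ ≤ (1/64) * (l * SD) := mul_le_mul_of_nonneg_right hlh2 e6
  have e2 : l^3 * h^2 * Sσ ≤ (1/64) * (l * Sσ) := by
    calc l^3 * h^2 * Sσ = (l^2 * h^2) * (l * Sσ) := by ring
      _ ≤ (1/64) * (l * Sσ) := mul_le_mul_of_nonneg_right hlh2 e7
  have e3 : l * (2 - l) * SV ≤ 2 * (l * SV) := by
    nlinarith [mul_nonneg (mul_nonneg hl0.le hl0.le) hSV0]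
  have e4 : (l/3) * SD - (1/2) * l * (1 - l) * SD ≤ -(5/48) * (l * SD) := by
    nlinarith [mul_nonneg (by linarith : (0:ℝ) ≤ 1/8 - l) e6]
  have e5 : 0 ≤ l^3 * h^2 * Sσ := by positivity
  linarith

set_option maxHeartbeats 1000000

/-- key estimate combining the descent term and the summed
deviation V_k over an epoch. -/
theorem stmt_13 (d M : ℕ) (hM : 0 < M)
    (T : Fin M → EuclideanSpace ℝ (Fin d) → EuclideanSpace ℝ (Fin d))
    (hT : ∀ i, ∀ x y, ‖T i x - T i y‖ ^ 2
      ≤ ‖x - y‖ ^ 2 - ‖T i x - x - T i y + y‖ ^ 2)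
    (g : Fin M → EuclideanSpace ℝ (Fin d) → EuclideanSpace ℝ (Fin d))
    (hg : ∀ i x, g i x = x - T i x)
    (xs : EuclideanSpace ℝ (Fin d)) (hxs : (M : ℝ)⁻¹ • ∑ i, T i xs = xs)
    (σ2 : ℝ) (hσ2 : σ2 = (M : ℝ)⁻¹ * ∑ i, ‖xs - T i xs‖ ^ 2)
    (H : ℕ) (hH : 1 ≤ H)
    (kp kq : ℕ) (hk : kp < kq) (hkH : kq - kp ≤ H)
    (l : ℝ) (hl0 : 0 < l) (hl1 : l ≤ 1 / (8 * max 1 ((H : ℝ) - 1)))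
    (x : Fin M → ℕ → EuclideanSpace ℝ (Fin d))
    (xhat : ℕ → EuclideanSpace ℝ (Fin d))
    (hxhat : ∀ k, xhat k = (M : ℝ)⁻¹ • ∑ i, x i k)
    (hinit : ∀ i, x i kp = xhat kp)
    (hrec : ∀ k, kp ≤ k → k + 1 < kq → ∀ i, x i (k + 1) = x i k - l • g i (x i k))
    (V : ℕ → ℝ) (hV : ∀ k, V k = (M : ℝ)⁻¹ * ∑ i, ‖x i k - xhat k‖ ^ 2) :
    ∑ k ∈ Finset.Ico kp kq,
        (-(1 / 2) * l * (1 - l)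
            * ((M : ℝ)⁻¹ * ∑ i, ‖xhat k - T i (xhat k) + T i xs - xs‖ ^ 2)
          + l * (2 - l) * V k)
      ≤ -(l / 3) * ∑ k ∈ Finset.Ico kp kq,
            (M : ℝ)⁻¹ * ∑ i, ‖xhat k - T i (xhat k) + T i xs - xs‖ ^ 2
        + 12 * l ^ 3 * ((H : ℝ) - 1) ^ 2 * ∑ _k ∈ Finset.Ico kp kq, σ2 := by
  classical
  have hM0 : (M : ℝ) ≠ 0 := Nat.cast_ne_zero.mpr hM.ne'
  have hMi0 : (0:ℝ) ≤ (M : ℝ)⁻¹ := by positivity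
  set D : ℕ → ℝ := fun k => (M : ℝ)⁻¹ * ∑ i, ‖xhat k - T i (xhat k) + T i xs - xs‖ ^ 2
    with hD
  have hDk : ∀ k, (M : ℝ)⁻¹ * ∑ i, ‖xhat k - T i (xhat k) + T i xs - xs‖ ^ 2 = D k :=
    fun k => rfl
  have hD0 : ∀ k, 0 ≤ D k := by
    intro k; rw [hD]
    have : (0:ℝ) ≤ ∑ i, ‖xhat k - T i (xhat k) + T i xs - xs‖ ^ 2 :=
      Finset.sum_nonneg fun i _ => sq_nonneg _
    positivity
  have hV0 : ∀ k, 0 ≤ V k := by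
    intro k; rw [hV]
    have : (0:ℝ) ≤ ∑ i, ‖x i k - xhat k‖ ^ 2 := Finset.sum_nonneg fun i _ => sq_nonneg _
    positivity
  have hσ0 : 0 ≤ σ2 := by
    rw [hσ2]
    have : (0:ℝ) ≤ ∑ i, ‖xs - T i xs‖ ^ 2 := Finset.sum_nonneg fun i _ => sq_nonneg _
    positivity
  -- nonexpansiveness of g (squared form)
  have hgne : ∀ (i : Fin M) (a b : EuclideanSpace ℝ (Fin d)),
      ‖g i a - g i b‖ ^ 2 ≤ ‖a - b‖ ^ 2 := by
    intro i a b
    have h1 := hT i a b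
    have h2 : g i a - g i b = -(T i a - a - T i b + b) := by rw [hg, hg]; abel
    rw [h2, norm_neg]
    nlinarith [sq_nonneg ‖T i a - T i b‖]
  set gbar : ℕ → EuclideanSpace ℝ (Fin d) := fun k => (M:ℝ)⁻¹ • ∑ i, g i (x i k) with hgbar
  -- recursion for the mean
  have hxhatrec : ∀ k, kp ≤ k → k + 1 < kq → xhat (k+1) = xhat k - l • gbar k := by
    intro k h1 h2
    rw [hxhat, hxhat]
    have hx : ∀ i : Fin M, x i (k+1) = x i k - l • g i (x i k) := hrec k h1 h2
    calc (M:ℝ)⁻¹ • ∑ i, x i (k+1) = (M:ℝ)⁻¹ • ∑ i, (x i k - l • g i (x i k)) := by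
          rw [Finset.sum_congr rfl fun i _ => hx i]
      _ = (M:ℝ)⁻¹ • ∑ i, x i k - l • gbar k := by
          rw [Finset.sum_sub_distrib, smul_sub, hgbar, ← Finset.smul_sum, smul_comm]
  -- deviation identity
  have hdev : ∀ k, kp ≤ k → k < kq → ∀ i : Fin M,
      x i k - xhat k = (-l) • ∑ j ∈ Finset.Ico kp k, (g i (x i j) - gbar j) := by
    intro k hk1
    induction k, hk1 using Nat.le_induction with
    | base => intro _ i; simp [hinit i]
    | succ k hk ih =>
      intro hlt i
      have hklt : k < kq := by omega
      rw [hrec k hk hlt i, hxhatrec k hk hlt, Finset.sum_Ico_succ_top hk, smul_add,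
        ← ih hklt i]
      module
  -- second moment of local residuals
  have hGbound : ∀ j, kp ≤ j → j < kq →
      (M:ℝ)⁻¹ * ∑ i, ‖g i (x i j)‖ ^ 2 ≤ 3 * (V j + D j + σ2) := by
    intro j h1 h2
    have hper : ∀ i : Fin M, ‖g i (x i j)‖ ^ 2 ≤
        3 * ‖x i j - xhat j‖ ^ 2 + 3 * ‖xhat j - T i (xhat j) + T i xs - xs‖ ^ 2
          + 3 * ‖xs - T i xs‖ ^ 2 := by
      intro i
      have hdecomp : g i (x i j) = (g i (x i j) - g i (xhat j))
          + (xhat j - T i (xhat j) + T i xs - xs) + (xs - T i xs) := by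
        simp only [hg]; abel
      have e1 : ‖g i (x i j) - g i (xhat j)‖ ^ 2 ≤ ‖x i j - xhat j‖ ^ 2 := hgne i _ _
      have e2 : ‖g i (x i j)‖ ≤ ‖g i (x i j) - g i (xhat j)‖
          + ‖xhat j - T i (xhat j) + T i xs - xs‖ + ‖xs - T i xs‖ := by
        calc ‖g i (x i j)‖ = ‖(g i (x i j) - g i (xhat j))
              + (xhat j - T i (xhat j) + T i xs - xs) + (xs - T i xs)‖ :=
            congrArg norm hdecomp
          _ ≤ _ := (norm_add_le _ _).trans (by gcongr; exact norm_add_le _ _)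
      nlinarith [norm_nonneg (g i (x i j)), norm_nonneg (g i (x i j) - g i (xhat j)),
        norm_nonneg (xhat j - T i (xhat j) + T i xs - xs), norm_nonneg (xs - T i xs),
        sq_nonneg (‖g i (x i j) - g i (xhat j)‖ - ‖xhat j - T i (xhat j) + T i xs - xs‖),
        sq_nonneg (‖g i (x i j) - g i (xhat j)‖ - ‖xs - T i xs‖),
        sq_nonneg (‖xhat j - T i (xhat j) + T i xs - xs‖ - ‖xs - T i xs‖)]
    have hsum : ∑ i, ‖g i (x i j)‖ ^ 2 ≤
        ∑ i, (3 * ‖x i j - xhat j‖ ^ 2 + 3 * ‖xhat j - T i (xhat j) + T i xs - xs‖ ^ 2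
          + 3 * ‖xs - T i xs‖ ^ 2) := Finset.sum_le_sum fun i _ => hper i
    have hre : (M:ℝ)⁻¹ * ∑ i, (3 * ‖x i j - xhat j‖ ^ 2
          + 3 * ‖xhat j - T i (xhat j) + T i xs - xs‖ ^ 2 + 3 * ‖xs - T i xs‖ ^ 2)
        = 3 * (V j + D j + σ2) := by
      rw [hV, hD, hσ2]
      simp only [Finset.sum_add_distrib, ← Finset.mul_sum]
      ring
    calc (M:ℝ)⁻¹ * ∑ i, ‖g i (x i j)‖ ^ 2
        ≤ (M:ℝ)⁻¹ * ∑ i, (3 * ‖x i j - xhat j‖ ^ 2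
            + 3 * ‖xhat j - T i (xhat j) + T i xs - xs‖ ^ 2 + 3 * ‖xs - T i xs‖ ^ 2) :=
          mul_le_mul_of_nonneg_left hsum hMi0
      _ = 3 * (V j + D j + σ2) := hre
  -- abbreviations for the epoch sums
  set SD : ℝ := ∑ k ∈ Finset.Ico kp kq, D k with hSD
  set SV : ℝ := ∑ k ∈ Finset.Ico kp kq, V k with hSV
  set Sa : ℝ := ∑ k ∈ Finset.Ico kp kq, (V k + D k + σ2) with hSa
  have hSa0 : 0 ≤ Sa :=
    Finset.sum_nonneg fun k _ => by have := hV0 k; have := hD0 k; linarith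
  -- per-step deviation bound
  have hVk : ∀ k ∈ Finset.Ico kp kq, V k ≤ 3 * l^2 * ((k - kp : ℕ) : ℝ) * Sa := by
    intro k hkm
    rw [Finset.mem_Ico] at hkm
    obtain ⟨hk1, hk2⟩ := hkm
    have step1 : V k ≤ l^2 * ((k - kp : ℕ) : ℝ) *
        ∑ j ∈ Finset.Ico kp k, ((M:ℝ)⁻¹ * ∑ i, ‖g i (x i j) - gbar j‖ ^ 2) := by
      rw [hV]
      have e1 : ∀ i : Fin M, ‖x i k - xhat k‖ ^ 2
          = l^2 * ‖∑ j ∈ Finset.Ico kp k, (g i (x i j) - gbar j)‖ ^ 2 := by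
        intro i
        rw [hdev k hk1 hk2 i, norm_smul]
        rw [Real.norm_eq_abs, abs_neg, abs_of_pos hl0]
        ring
      calc (M:ℝ)⁻¹ * ∑ i, ‖x i k - xhat k‖ ^ 2
          = (M:ℝ)⁻¹ * ∑ i, l^2 * ‖∑ j ∈ Finset.Ico kp k, (g i (x i j) - gbar j)‖ ^ 2 := by
            rw [Finset.sum_congr rfl fun i _ => e1 i]
        _ ≤ (M:ℝ)⁻¹ * ∑ i : Fin M, l^2 * (((Finset.Ico kp k).card : ℝ)
              * ∑ j ∈ Finset.Ico kp k, ‖g i (x i j) - gbar j‖ ^ 2) := by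
            apply mul_le_mul_of_nonneg_left _ hMi0
            apply Finset.sum_le_sum
            intro i _
            exact mul_le_mul_of_nonneg_left (aux_cs _ _) (sq_nonneg l)
        _ = l^2 * ((k - kp : ℕ) : ℝ) *
              ∑ j ∈ Finset.Ico kp k, ((M:ℝ)⁻¹ * ∑ i, ‖g i (x i j) - gbar j‖ ^ 2) := by
            rw [Nat.card_Ico]
            simp only [Finset.mul_sum]
            rw [Finset.sum_comm]
            apply Finset.sum_congr rfl
            intro j _
            apply Finset.sum_congr rfl
            intro i _
            ring
    have step2 : ∑ j ∈ Finset.Ico kp k, ((M:ℝ)⁻¹ * ∑ i, ‖g i (x i j) - gbar j‖ ^ 2)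
        ≤ 3 * Sa := by
      have hsub : Finset.Ico kp k ⊆ Finset.Ico kp kq :=
        Finset.Ico_subset_Ico le_rfl hk2.le
      calc ∑ j ∈ Finset.Ico kp k, ((M:ℝ)⁻¹ * ∑ i, ‖g i (x i j) - gbar j‖ ^ 2)
          ≤ ∑ j ∈ Finset.Ico kp k, 3 * (V j + D j + σ2) := by
            apply Finset.sum_le_sum
            intro j hj
            rw [Finset.mem_Ico] at hj
            have hj2 : j < kq := lt_of_lt_of_le hj.2 hk2.le
            have hvar : ∑ i, ‖g i (x i j) - gbar j‖ ^ 2 ≤ ∑ i, ‖g i (x i j)‖ ^ 2 :=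
              aux_var (fun i => g i (x i j)) hM
            calc (M:ℝ)⁻¹ * ∑ i, ‖g i (x i j) - gbar j‖ ^ 2
                ≤ (M:ℝ)⁻¹ * ∑ i, ‖g i (x i j)‖ ^ 2 :=
                  mul_le_mul_of_nonneg_left hvar hMi0
              _ ≤ 3 * (V j + D j + σ2) := hGbound j hj.1 hj2
        _ ≤ ∑ j ∈ Finset.Ico kp kq, 3 * (V j + D j + σ2) := by
            apply Finset.sum_le_sum_of_subset_of_nonneg hsub
            intro j _ _
            have := hV0 j; have := hD0 j
            linarith
        _ = 3 * Sa := by rw [hSa, Finset.mul_sum]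
    calc V k ≤ l^2 * ((k - kp : ℕ) : ℝ) *
          ∑ j ∈ Finset.Ico kp k, ((M:ℝ)⁻¹ * ∑ i, ‖g i (x i j) - gbar j‖ ^ 2) := step1
      _ ≤ l^2 * ((k - kp : ℕ) : ℝ) * (3 * Sa) := by
          apply mul_le_mul_of_nonneg_left step2
          positivity
      _ = 3 * l^2 * ((k - kp : ℕ) : ℝ) * Sa := by ring
  -- Gauss sum bound
  have hgauss : ∑ k ∈ Finset.Ico kp kq, ((k - kp : ℕ) : ℝ) ≤ ((H:ℝ) - 1) ^ 2 := by
    have hre : ∑ k ∈ Finset.Ico kp kq, ((k - kp : ℕ) : ℝ)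
        = ((∑ n ∈ Finset.range (kq - kp), n : ℕ) : ℝ) := by
      rw [Finset.sum_Ico_eq_sum_range]
      push_cast
      apply Finset.sum_congr rfl
      intro n _
      congr 1
      omega
    rw [hre]
    have hnat : (∑ n ∈ Finset.range (kq - kp), n) * 2 ≤ ((H - 1) * (H - 1)) * 2 := by
      rw [Finset.sum_range_id_mul_two]
      have h1 : kq - kp ≤ H := hkH
      have h2 : kq - kp - 1 ≤ H - 1 := by omega
      calc (kq - kp) * (kq - kp - 1) ≤ H * (H - 1) := Nat.mul_le_mul h1 h2
        _ ≤ ((H - 1) * (H - 1)) * 2 := by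
            rcases Nat.eq_or_lt_of_le hH with h | h
            · simp [← h]
            · have : H ≤ 2 * (H - 1) := by omega
              calc H * (H - 1) ≤ (2 * (H - 1)) * (H - 1) := Nat.mul_le_mul_right _ this
                _ = ((H - 1) * (H - 1)) * 2 := by ring
    have hnat2 : (∑ n ∈ Finset.range (kq - kp), n) ≤ (H - 1) * (H - 1) := by omega
    have hc : (((H - 1) * (H - 1) : ℕ) : ℝ) = ((H:ℝ) - 1) ^ 2 := by
      have : ((H - 1 : ℕ) : ℝ) = (H:ℝ) - 1 := by
        rw [Nat.cast_sub hH]; norm_num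
      push_cast [this]
      ring
    calc ((∑ n ∈ Finset.range (kq - kp), n : ℕ) : ℝ)
        ≤ (((H - 1) * (H - 1) : ℕ) : ℝ) := by exact_mod_cast hnat2
      _ = ((H:ℝ) - 1) ^ 2 := hc
  -- key summed bound
  have hh0 : (0:ℝ) ≤ (H:ℝ) - 1 := by
    have : (1:ℝ) ≤ (H:ℝ) := by exact_mod_cast hH
    linarith
  have key : SV ≤ 3 * l^2 * ((H:ℝ) - 1)^2 * Sa := by
    calc SV ≤ ∑ k ∈ Finset.Ico kp kq, 3 * l^2 * ((k - kp : ℕ) : ℝ) * Sa :=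
          Finset.sum_le_sum hVk
      _ = 3 * l^2 * Sa * ∑ k ∈ Finset.Ico kp kq, ((k - kp : ℕ) : ℝ) := by
          rw [Finset.mul_sum]
          apply Finset.sum_congr rfl
          intro k _; ring
      _ ≤ 3 * l^2 * Sa * ((H:ℝ) - 1)^2 := by
          apply mul_le_mul_of_nonneg_left hgauss
          positivity
      _ = 3 * l^2 * ((H:ℝ) - 1)^2 * Sa := by ring
  -- bounds on l
  have hmaxpos : (0:ℝ) < 8 * max 1 ((H : ℝ) - 1) := by positivity
  have hmax1 : (1:ℝ) ≤ max 1 ((H : ℝ) - 1) := le_max_left _ _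
  have hmaxne : max 1 ((H : ℝ) - 1) ≠ 0 := by linarith
  have hl8 : l ≤ 1/8 := by
    calc l ≤ 1 / (8 * max 1 ((H : ℝ) - 1)) := hl1
      _ ≤ 1/8 := by
        apply one_div_le_one_div_of_le (by norm_num)
        linarith
  have hlmax : l * max 1 ((H : ℝ) - 1) ≤ 1/8 := by
    have := mul_le_mul_of_nonneg_right hl1 (by linarith : (0:ℝ) ≤ max 1 ((H : ℝ) - 1))
    calc l * max 1 ((H : ℝ) - 1) ≤ 1 / (8 * max 1 ((H : ℝ) - 1)) * max 1 ((H : ℝ) - 1) := this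
      _ = 1/8 := by field_simp
  have hlh : l * ((H:ℝ) - 1) ≤ 1/8 := by
    have h2 : (H:ℝ) - 1 ≤ max 1 ((H : ℝ) - 1) := le_max_right _ _
    calc l * ((H:ℝ) - 1) ≤ l * max 1 ((H : ℝ) - 1) :=
          mul_le_mul_of_nonneg_left h2 hl0.le
      _ ≤ 1/8 := hlmax
  -- final conversion of goal
  simp only [hDk]
  rw [Finset.sum_add_distrib, Finset.sum_const, Nat.card_Ico]
  have hSσ : ∑ k ∈ Finset.Ico kp kq, σ2 = ((kq - kp : ℕ) : ℝ) * σ2 := by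
    rw [Finset.sum_const, Nat.card_Ico, nsmul_eq_mul]
  set Sσ : ℝ := ((kq - kp : ℕ) : ℝ) * σ2 with hSσdef
  have hSσ0 : 0 ≤ Sσ := mul_nonneg (Nat.cast_nonneg _) hσ0
  have hSaeq : Sa = SV + SD + Sσ := by
    rw [hSa, Finset.sum_add_distrib, Finset.sum_add_distrib, hSσ]
  have hSD0 : 0 ≤ SD := Finset.sum_nonneg fun k _ => hD0 k
  have hSV0 : 0 ≤ SV := Finset.sum_nonneg fun k _ => hV0 k
  have hLHS : ∑ k ∈ Finset.Ico kp kq, (-(1 / 2) * l * (1 - l) * D k)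
      = -(1/2) * l * (1 - l) * SD := by rw [hSD, Finset.mul_sum]
  have hLHS2 : ∑ k ∈ Finset.Ico kp kq, (l * (2 - l) * V k)
      = l * (2 - l) * SV := by rw [hSV, Finset.mul_sum]
  rw [hLHS, hLHS2, nsmul_eq_mul, ← hSσdef]
  rw [hSaeq] at key
  exact aux_arith ((H:ℝ) - 1) l SD SV Sσ hl0 hl8 hlh hh0 hSD0 hSV0 hSσ0 key
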